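/- Let G be a finite connected simple undirected graph on vertex set V and let S ⊆ V with |S| ≥ 2. If for every vertex v ∈ V∖S either N_S(v) = ∅ or N_S(v) = S (i.e., every vertex outside S is adjacent either to no vertex of S or to every vertex of S), then S is a critical set: there exists a nonzero vector y ∈ ℝ^V and a real λ with L(G)y = λy and y_v = 0 for all v ∉ S. -/

import Mathlib

open Matrix

/-- **Theorem 1.** If every vertex outside `S` (with `|S| ≥ 2`) is adjacent either to no
vertex of `S` or to every vertex of `S`, then `S` is a critical set: some Laplacian
eigenvector vanishes everywhere outside `S`. -/
theorem stmt_4 {V : Type*} [Fintype V] [DecidableEq V] (G : SimpleGraph V) [DecidableRel G.Adj]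
    (hconn : G.Connected) (S : Finset V) (hS : 2 ≤ S.card)
    (h : ∀ v ∉ S, S.filter (fun u => G.Adj v u) = ∅ ∨ S.filter (fun u => G.Adj v u) = S) :
    ∃ (y : V → ℝ) (l : ℝ) , y ≠ 0 ∧ G.lapMatrix ℝ *ᵥ y = l • y ∧ ∀ v ∉ S, y v = 0 := by
  classical
  set L := G.lapMatrix ℝ with hL
  -- the key fact: if y vanishes off S and sums to zero, then so does L *ᵥ y
  have key : ∀ y : V → ℝ, (∀ v ∉ S, y v = 0) → (∑ v, y v = 0) →
      (∀ v ∉ S, (L *ᵥ y) v = 0) ∧ (∑ v, (L *ᵥ y) v = 0) := by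
    intro y hy0 hysum
    have hsumS : ∑ u ∈ S, y u = 0 := by
      rw [← hysum]
      exact Finset.sum_subset (Finset.subset_univ S) (fun x _ hx => hy0 x hx)
    constructor
    · intro v hv
      rw [SimpleGraph.lapMatrix_mulVec_apply, hy0 v hv, mul_zero, zero_sub, neg_eq_zero]
      have hsplit : ∑ u ∈ G.neighborFinset v, y u = ∑ u ∈ S.filter (fun u => G.Adj v u), y u := by
        refine (Finset.sum_subset ?_ ?_).symm
        · intro x hx
          rw [SimpleGraph.mem_neighborFinset]
          exact (Finset.mem_filter.mp hx).2
        · intro x hx hx'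
          refine hy0 x (fun hxS => hx' ?_)
          exact Finset.mem_filter.mpr ⟨hxS, (SimpleGraph.mem_neighborFinset _ _ _).mp hx⟩
      rcases h v hv with hcase | hcase
      · rw [hsplit, hcase, Finset.sum_empty]
      · rw [hsplit, hcase, hsumS]
    · -- column sums of L are zero
      have h1 : L *ᵥ (fun _ => (1:ℝ)) = 0 := G.lapMatrix_mulVec_const_eq_zero
      have : (fun _ => (1:ℝ)) ⬝ᵥ (L *ᵥ y) = 0 := by
        rw [dotProduct_mulVec, ← mulVec_transpose, (G.isSymm_lapMatrix ℝ).eq, h1, zero_dotProduct]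
      simpa [dotProduct] using this
  -- the invariant submodule
  let W : Submodule ℝ (EuclideanSpace ℝ V) :=
    { carrier := {y | (∀ v ∉ S, y v = 0) ∧ ∑ v, y v = 0}
      add_mem' := by
        rintro a b ⟨ha1, ha2⟩ ⟨hb1, hb2⟩
        refine ⟨fun v hv => ?_, ?_⟩
        · show a v + b v = 0
          rw [ha1 v hv, hb1 v hv, add_zero]
        · show ∑ v, (a v + b v) = 0
          rw [Finset.sum_add_distrib, ha2, hb2, add_zero]
      zero_mem' := ⟨fun v _ => rfl, by simp⟩
      smul_mem' := by
        rintro c a ⟨ha1, ha2⟩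
        refine ⟨fun v hv => ?_, ?_⟩
        · show c * a v = 0
          rw [ha1 v hv, mul_zero]
        · show ∑ v, c * a v = 0
          rw [← Finset.mul_sum, ha2, mul_zero] }
  have hmemW : ∀ y : EuclideanSpace ℝ V,
      y ∈ W ↔ (∀ v ∉ S, y v = 0) ∧ ∑ v, y v = 0 := fun y => Iff.rfl
  let T : EuclideanSpace ℝ V →ₗ[ℝ] EuclideanSpace ℝ V := Matrix.toEuclideanLin L
  have hTapp : ∀ y : EuclideanSpace ℝ V, ∀ v : V, T y v = (L *ᵥ y) v := fun y v => rfl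
  have hTW : ∀ y ∈ W, T y ∈ W := by
    intro y hy
    obtain ⟨h1, h2⟩ := key y hy.1 hy.2
    exact ⟨h1, h2⟩
  -- nontriviality of W
  obtain ⟨a, ha, b, hb, hab⟩ := Finset.one_lt_card.mp hS
  let y0 : EuclideanSpace ℝ V := WithLp.toLp 2 (fun v => if v = a then 1 else if v = b then -1 else 0)
  have hpt : ∀ v, y0 v = (if v = a then (1:ℝ) else 0) + (if v = b then -1 else 0) := by
    intro v
    simp only [y0]
    split_ifs with h1 h2
    · exact absurd (h1.symm.trans h2) hab
    · ring
    · ring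
    · ring
  have hy0W : y0 ∈ W := by
    constructor
    · intro v hv
      show (if v = a then (1:ℝ) else if v = b then -1 else 0) = 0
      rw [if_neg (fun hc : v = a => hv (hc ▸ ha)), if_neg (fun hc : v = b => hv (hc ▸ hb))]
    · show ∑ v, y0 v = 0
      simp [hpt, Finset.sum_add_distrib]
  have hy0ne : y0 ≠ 0 := by
    intro hc
    have := congrFun (congrArg (fun f : EuclideanSpace ℝ V => (f : V → ℝ)) hc) a
    simp [y0] at this
  have : Nontrivial W := ⟨⟨⟨y0, hy0W⟩, 0, fun hc => hy0ne (congrArg Subtype.val hc)⟩⟩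
  -- the restricted operator is symmetric, hence has an eigenvector
  have hHerm : L.IsHermitian := by
    rw [Matrix.IsHermitian, Matrix.conjTranspose_eq_transpose_of_trivial]
    exact G.isSymm_lapMatrix ℝ
  have hsymm : (Matrix.toEuclideanLin L).IsSymmetric :=
    Matrix.isHermitian_iff_isSymmetric.mp hHerm
  have hrsymm : (T.restrict hTW).IsSymmetric := hsymm.restrict_invariant hTW
  obtain ⟨μ, hμ⟩ : ∃ μ, Module.End.HasEigenvalue (T.restrict hTW) μ :=
    ⟨_, hrsymm.hasEigenvalue_iSup_of_finiteDimensional⟩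
  obtain ⟨x, hx⟩ := hμ.exists_hasEigenvector
  refine ⟨(x : EuclideanSpace ℝ V), μ, ?_, ?_, (x.2 : _ ∈ W).1⟩
  · intro hc
    exact hx.right (Subtype.ext ((WithLp.ofLp_eq_zero 2).mp hc))
  · have := hx.apply_eq_smul
    have h2 : T (x : EuclideanSpace ℝ V) = μ • (x : EuclideanSpace ℝ V) := by
      have := congrArg (Subtype.val) this
      simpa [LinearMap.restrict_coe_apply] using this
    funext v
    have := congrFun (congrArg (fun f : EuclideanSpace ℝ V => (f : V → ℝ)) h2) v
    simpa [hTapp] using this
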